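/- Let E be a real inner product space, X ⊆ E a nonempty convex set, d : E → ℝ a convex Fréchet-differentiable function with Bregman divergence V(y,x) := d(y) − d(x) − ⟨∇d(x), y − x⟩, μ > 0, and g : E → E a μ-relatively strongly monotone operator on X with z* ∈ X a solution of the Minty variational inequality. Let L > 0, δ ≥ 0, and z, w, z⁺ ∈ X be such that: (i) w minimizes y ↦ ⟨(1/L)·g(z), y⟩ + V(y, z) over X; (ii) z⁺ minimizes u ↦ ⟨(1/L)·g(w), u⟩ + V(u, z) + (μ/L)·V(u, w) over X; (iii) ⟨g(z) − g(w), z⁺ − w⟩ ≤ L·( V(w, z) + V(z⁺, w) ) + L·δ. Then V(z*, z⁺) ≤ (1 + μ/L)^{−1}·V(z*, z) + L·δ/(L + μ); in particular V(z*, z⁺) ≤ (1 + μ/L)^{−1}·V(z*, z) + δ. -/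

import Mathlib

open scoped RealInnerProductSpace
open Finset

section Helpers

lemma deriv_nonneg_of_min (f : ℝ → ℝ) (f' : ℝ) (hf : HasDerivAt f f' 0)
    (h : ∀ t ∈ Set.Ioc (0:ℝ) 1, f 0 ≤ f t) : 0 ≤ f' := by
  have h1 : Filter.Tendsto (slope f 0) (nhdsWithin 0 (Set.Ioi 0)) (nhds f') :=
    (hasDerivAt_iff_tendsto_slope.mp hf).mono_left
      (nhdsWithin_mono _ (fun x hx => ne_of_gt hx))
  refine ge_of_tendsto h1 ?_
  filter_upwards [Ioc_mem_nhdsGT_of_mem (Set.left_mem_Ico.2 one_pos)] with t ht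
  rw [slope_def_field, sub_zero]
  exact div_nonneg (by linarith [h t ht]) ht.1.le

lemma deriv_le_slope' (f : ℝ → ℝ) (f' : ℝ) (hf : HasDerivAt f f' 0)
    (h : ∀ t ∈ Set.Ioc (0:ℝ) 1, f t ≤ f 0 + t * (f 1 - f 0)) : f' ≤ f 1 - f 0 := by
  have h1 : Filter.Tendsto (slope f 0) (nhdsWithin 0 (Set.Ioi 0)) (nhds f') :=
    (hasDerivAt_iff_tendsto_slope.mp hf).mono_left
      (nhdsWithin_mono _ (fun x hx => ne_of_gt hx))
  refine le_of_tendsto h1 ?_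
  filter_upwards [Ioc_mem_nhdsGT_of_mem (Set.left_mem_Ico.2 one_pos)] with t ht
  rw [slope_def_field, sub_zero, div_le_iff₀ ht.1]
  nlinarith [h t ht, ht.1]

variable {E : Type*} [NormedAddCommGroup E] [InnerProductSpace ℝ E] [CompleteSpace E]

lemma hasDerivAt_d_line (d : E → ℝ) (Dd : E → E) (hd : ∀ x, HasGradientAt d (Dd x) x)
    (x v : E) : HasDerivAt (fun t : ℝ => d (x + t • v)) ⟪Dd x, v⟫ 0 := by
  have hline : HasDerivAt (fun t : ℝ => x + t • v) v 0 := by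
    simpa using ((hasDerivAt_id (0:ℝ)).smul_const v).const_add x
  have h := (hd (x + (0:ℝ) • v)).hasFDerivAt.comp_hasDerivAt 0 hline
  simp at h; exact h

omit [CompleteSpace E] in
lemma hasDerivAt_inner_line (a x v : E) :
    HasDerivAt (fun t : ℝ => ⟪a, x + t • v⟫) ⟪a, v⟫ 0 := by
  have he : (fun t : ℝ => ⟪a, x + t • v⟫) = fun t => ⟪a, x⟫ + t * ⟪a, v⟫ := by
    funext t; simp [inner_add_right, real_inner_smul_right]
  rw [he]
  simpa using ((hasDerivAt_id (0:ℝ)).mul_const ⟪a, v⟫).const_add ⟪a, x⟫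

lemma bregman_nonneg (d : E → ℝ) (hdconv : ConvexOn ℝ Set.univ d)
    (Dd : E → E) (hd : ∀ x, HasGradientAt d (Dd x) x) (x y : E) :
    d x + ⟪Dd x, y - x⟫ ≤ d y := by
  have hf := hasDerivAt_d_line d Dd hd x (y - x)
  have key := deriv_le_slope' _ _ hf ?_
  · simp only [zero_smul, add_zero, one_smul, add_sub_cancel] at key
    linarith
  · intro t ht
    have h2 := hdconv.2 (Set.mem_univ x) (Set.mem_univ y)
      (by linarith [ht.1, ht.2] : (0:ℝ) ≤ 1 - t) (le_of_lt ht.1) (by ring)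
    have he : (1 - t) • x + t • y = x + t • (y - x) := by
      rw [smul_sub, sub_smul, one_smul]; abel
    rw [he, smul_eq_mul, smul_eq_mul] at h2
    simp only [zero_smul, add_zero, one_smul, add_sub_cancel]
    nlinarith

end Helpers

/-- One-step contraction of Algorithm 5 (proof of Theorem 4): single iteration
with line-search slack L·δ. -/
theorem algorithm5_one_step_contraction
    {E : Type*} [NormedAddCommGroup E] [InnerProductSpace ℝ E] [CompleteSpace E]
    (X : Set E) (hXne : X.Nonempty) (hXconv : Convex ℝ X)
    (d : E → ℝ) (hdconv : ConvexOn ℝ Set.univ d)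
    (Dd : E → E) (hd : ∀ x, HasGradientAt d (Dd x) x)
    (V : E → E → ℝ) (hV : ∀ y x, V y x = d y - d x - ⟪Dd x, y - x⟫)
    (μ : ℝ) (hμ : 0 < μ) (g : E → E)
    (hmono : ∀ x ∈ X, ∀ y ∈ X, μ * (V y x + V x y) ≤ ⟪g y - g x, y - x⟫)
    (zs : E) (hzs : zs ∈ X) (hMinty : ∀ x ∈ X, ⟪g x, zs - x⟫ ≤ 0)
    (L δ : ℝ) (hL : 0 < L) (hδ : 0 ≤ δ)
    (z w zp : E) (hzX : z ∈ X) (hwX : w ∈ X) (hzpX : zp ∈ X)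
    (hwmin : ∀ y ∈ X,
      (1 / L) * ⟪g z, w⟫ + V w z ≤ (1 / L) * ⟪g z, y⟫ + V y z)
    (hzpmin : ∀ u ∈ X,
      (1 / L) * ⟪g w, zp⟫ + V zp z + (μ / L) * V zp w ≤
        (1 / L) * ⟪g w, u⟫ + V u z + (μ / L) * V u w)
    (hls : ⟪g z - g w, zp - w⟫ ≤ L * (V w z + V zp w) + L * δ) :
    V zs zp ≤ (1 + μ / L)⁻¹ * V zs z + L * δ / (L + μ) ∧
      V zs zp ≤ (1 + μ / L)⁻¹ * V zs z + δ := by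
  have hLne : L ≠ 0 := hL.ne'
  have hV0 : ∀ x y : E, 0 ≤ V y x := by
    intro x y; rw [hV]; linarith [bregman_nonneg d hdconv Dd hd x y]
  -- Q1 : optimality of w in direction zp - w
  have Q1 : 0 ≤ ⟪g z, zp - w⟫ + L * (V zp z - V zp w - V w z) := by
    set v := zp - w with hv
    have hf : HasDerivAt
        (fun t : ℝ => ⟪g z, w + t • v⟫ +
          L * (d (w + t • v) - d z - (⟪Dd z, w + t • v⟫ - ⟪Dd z, z⟫)))
        (⟪g z, v⟫ + L * (⟪Dd w, v⟫ - ⟪Dd z, v⟫)) 0 :=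
      (hasDerivAt_inner_line (g z) w v).add
        ((((hasDerivAt_d_line d Dd hd w v).sub_const (d z)).sub
          ((hasDerivAt_inner_line (Dd z) w v).sub_const ⟪Dd z, z⟫)).const_mul L)
    have hmin0 := deriv_nonneg_of_min _ _ hf ?_
    · have id1 : ⟪Dd w, v⟫ - ⟪Dd z, v⟫ = V zp z - V zp w - V w z := by
        simp only [hv, hV, inner_sub_right]; ring
      rw [id1] at hmin0
      exact hmin0
    · intro t ht
      have hyX : w + t • v ∈ X := by
        have hm := hXconv hwX hzpX (by linarith [ht.2] : (0:ℝ) ≤ 1 - t) ht.1.le (by ring)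
        have he : (1 - t) • w + t • zp = w + t • v := by
          rw [hv, smul_sub, sub_smul, one_smul]; abel
        rwa [he] at hm
      have h := hwmin _ hyX
      rw [hV, hV] at h
      have h2 := mul_le_mul_of_nonneg_left h hL.le
      have hk : ∀ a b : ℝ, L * (1 / L * a + b) = a + L * b := by
        intro a b; field_simp
      rw [hk, hk] at h2
      simp only [zero_smul, add_zero, inner_sub_right] at h2 ⊢
      linarith
  -- Q2 : optimality of zp in direction zs - zp
  have Q2 : 0 ≤ ⟪g w, zs - zp⟫ + L * (V zs z - V zs zp - V zp z)
      + μ * (V zs w - V zs zp - V zp w) := by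
    set v := zs - zp with hv
    have hf : HasDerivAt
        (fun t : ℝ => ⟪g w, zp + t • v⟫ +
          L * (d (zp + t • v) - d z - (⟪Dd z, zp + t • v⟫ - ⟪Dd z, z⟫)) +
          μ * (d (zp + t • v) - d w - (⟪Dd w, zp + t • v⟫ - ⟪Dd w, w⟫)))
        (⟪g w, v⟫ + L * (⟪Dd zp, v⟫ - ⟪Dd z, v⟫) + μ * (⟪Dd zp, v⟫ - ⟪Dd w, v⟫)) 0 :=
      ((hasDerivAt_inner_line (g w) zp v).add
        ((((hasDerivAt_d_line d Dd hd zp v).sub_const (d z)).sub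
          ((hasDerivAt_inner_line (Dd z) zp v).sub_const ⟪Dd z, z⟫)).const_mul L)).add
        ((((hasDerivAt_d_line d Dd hd zp v).sub_const (d w)).sub
          ((hasDerivAt_inner_line (Dd w) zp v).sub_const ⟪Dd w, w⟫)).const_mul μ)
    have hmin0 := deriv_nonneg_of_min _ _ hf ?_
    · have id2 : ⟪Dd zp, v⟫ - ⟪Dd z, v⟫ = V zs z - V zs zp - V zp z := by
        simp only [hv, hV, inner_sub_right]; ring
      have id3 : ⟪Dd zp, v⟫ - ⟪Dd w, v⟫ = V zs w - V zs zp - V zp w := by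
        simp only [hv, hV, inner_sub_right]; ring
      rw [id2, id3] at hmin0
      exact hmin0
    · intro t ht
      have hyX : zp + t • v ∈ X := by
        have hm := hXconv hzpX hzs (by linarith [ht.2] : (0:ℝ) ≤ 1 - t) ht.1.le (by ring)
        have he : (1 - t) • zp + t • zs = zp + t • v := by
          rw [hv, smul_sub, sub_smul, one_smul]; abel
        rwa [he] at hm
      have h := hzpmin _ hyX
      rw [hV, hV, hV, hV] at h
      have h2 := mul_le_mul_of_nonneg_left h hL.le
      have hk : ∀ a b c : ℝ, L * (1 / L * a + b + μ / L * c) = a + L * b + μ * c := by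
        intro a b c; field_simp
      rw [hk, hk] at h2
      simp only [zero_smul, add_zero, inner_sub_right] at h2 ⊢
      linarith
  -- P3 : μ V(zs,w) ≤ ⟪g w, w - zs⟫
  have P3 : μ * V zs w ≤ ⟪g w, w - zs⟫ := by
    have hAB : ∀ t ∈ Set.Ioc (0:ℝ) 1,
        μ * (d (zs + t • (w - zs)) - d w - ⟪Dd w, zs + t • (w - zs) - w⟫) ≤
          (1 - t) * ⟪g w, w - zs⟫ := by
      intro t ht
      set xt : E := zs + t • (w - zs) with hxt
      have hxtX : xt ∈ X := by
        have hm := hXconv hzs hwX (by linarith [ht.2] : (0:ℝ) ≤ 1 - t) ht.1.le (by ring)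
        have he : (1 - t) • zs + t • w = xt := by
          rw [hxt, smul_sub, sub_smul, one_smul]; abel
        rwa [he] at hm
      have hmin := hMinty xt hxtX
      have he1 : zs - xt = (-t) • (w - zs) := by
        rw [hxt, neg_smul]; abel
      rw [he1, real_inner_smul_right] at hmin
      have hq : 0 ≤ ⟪g xt, w - zs⟫ := by nlinarith [ht.1]
      have hm := hmono xt hxtX w hwX
      have he2 : w - xt = (1 - t) • (w - zs) := by
        rw [hxt, sub_smul, one_smul]; abel
      rw [he2, real_inner_smul_right, inner_sub_left] at hm
      have h1t : (0:ℝ) ≤ 1 - t := by linarith [ht.2]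
      have hVxtw : V xt w = d xt - d w - ⟪Dd w, xt - w⟫ := hV xt w
      rw [← hVxtw]
      nlinarith [hV0 xt w, hV0 w xt, mul_nonneg h1t hq, mul_nonneg hμ.le (hV0 xt w),
        mul_nonneg hμ.le (hV0 w xt)]
    have hdd : Differentiable ℝ d := fun x => (hd x).differentiableAt
    have hdcont : Continuous d := hdd.continuous
    have hline : Continuous (fun t : ℝ => zs + t • (w - zs)) := by continuity
    have hAcont : Continuous (fun t : ℝ =>
        μ * (d (zs + t • (w - zs)) - d w - ⟪Dd w, zs + t • (w - zs) - w⟫)) :=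
      continuous_const.mul (((hdcont.comp hline).sub continuous_const).sub
        (continuous_const.inner (hline.sub continuous_const)))
    have hA : Filter.Tendsto
        (fun t : ℝ => μ * (d (zs + t • (w - zs)) - d w - ⟪Dd w, zs + t • (w - zs) - w⟫))
        (nhdsWithin 0 (Set.Ioi 0)) (nhds (μ * V zs w)) :=
      (hAcont.tendsto' 0 _ (by rw [hV]; simp)).mono_left nhdsWithin_le_nhds
    have hB : Filter.Tendsto (fun t : ℝ => (1 - t) * ⟪g w, w - zs⟫)
        (nhdsWithin 0 (Set.Ioi 0)) (nhds ⟪g w, w - zs⟫) :=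
      (((continuous_const.sub continuous_id).mul continuous_const).tendsto' 0 _
        (by simp)).mono_left nhdsWithin_le_nhds
    refine le_of_tendsto_of_tendsto hA hB ?_
    filter_upwards [Ioc_mem_nhdsGT_of_mem (Set.left_mem_Ico.2 one_pos)] with t ht
    exact hAB t ht
  -- combine everything
  have hsplit : ⟪g z, zp - w⟫ + ⟪g w, zs - zp⟫ + ⟪g w, w - zs⟫ = ⟪g z - g w, zp - w⟫ := by
    simp only [inner_sub_left, inner_sub_right]; ring
  have key : (L + μ) * V zs zp ≤ L * V zs z + L * δ := by
    linarith [Q1, Q2, P3, hls, hsplit, mul_nonneg hμ.le (hV0 w zp)]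
  have hLμ : 0 < L + μ := by linarith
  have h1p : (1 + μ / L)⁻¹ = L / (L + μ) := by
    rw [show 1 + μ / L = (L + μ) / L by field_simp, inv_div]
  have first : V zs zp ≤ (1 + μ / L)⁻¹ * V zs z + L * δ / (L + μ) := by
    rw [h1p, div_mul_eq_mul_div, ← add_div, le_div_iff₀ hLμ]
    nlinarith [key]
  have h2 : L * δ / (L + μ) ≤ δ := by
    rw [div_le_iff₀ hLμ]; nlinarith
  exact ⟨first, by linarith⟩
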